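/- For M = 1, let J be the 4 × 4 real matrix J = [[−(ν+μ), 0, −β₁⁰, 0], [0, −(η₁+μ), β₁⁰, 0], [0, η₁, −(γ₁+μ), 0], [ν, 0, γ₁, −μ]] (the Jacobian of the single-variant SEIR system at the disease-free equilibrium). Set A = √(4β₁⁰η₁ + (η₁ − γ₁)²) and B = η₁ + 2μ + γ₁, and assume β₁⁰, η₁ ≥ 0. Then the characteristic polynomial of J factors as (X + μ)(X + ν + μ)(X − (−A − B)/2)(X − (A − B)/2); equivalently, the eigenvalues of J are λ₁ = −μ, λ₂ = −(ν+μ), λ₃ = (−A − B)/2, and λ₄ = (A − B)/2. -/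

import Mathlib

open Polynomial

/-- Factorization of the characteristic polynomial of the Jacobian of the
single-variant (M = 1) SEIR system at the disease-free equilibrium; equivalently
the eigenvalues are `−μ`, `−(ν+μ)`, `(−A−B)/2` and `(A−B)/2`. -/
theorem single_variant_jacobian_charpoly
    (μ ν η₁ γ₁ β₁ : ℝ) (hμ : 0 ≤ μ) (hν : 0 ≤ ν) (hγ₁ : 0 ≤ γ₁)
    (hβ₁ : 0 ≤ β₁) (hη₁ : 0 ≤ η₁)
    (A B : ℝ) (hA : A = Real.sqrt (4 * β₁ * η₁ + (η₁ - γ₁) ^ 2))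
    (hB : B = η₁ + 2 * μ + γ₁)
    (J : Matrix (Fin 4) (Fin 4) ℝ)
    (hJ : J = !![-(ν + μ), 0, -β₁, 0;
                 0, -(η₁ + μ), β₁, 0;
                 0, η₁, -(γ₁ + μ), 0;
                 ν, 0, γ₁, -μ]) :
    J.charpoly =
      (X + C μ) * (X + C (ν + μ)) * (X - C ((-A - B) / 2)) * (X - C ((A - B) / 2)) := by

  have hA2 : A ^ 2 = 4 * β₁ * η₁ + (η₁ - γ₁) ^ 2 := by
    rw [hA, Real.sq_sqrt]; positivity
  have key : ((-A - B) / 2) * ((A - B) / 2) = (η₁ + μ) * (γ₁ + μ) - β₁ * η₁ := by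
    rw [hB]; linarith [hA2]
  have key2 : (-A - B) / 2 + (A - B) / 2 = -B := by ring
  have h1 : C ((-A - B) / 2) * C ((A - B) / 2) = C ((η₁ + μ) * (γ₁ + μ) - β₁ * η₁) := by
    rw [← C_mul, key]
  have h2 : C ((-A - B) / 2) + C ((A - B) / 2) = -C B := by rw [← C_add, key2, C_neg]
  have hrhs : (X - C ((-A - B) / 2)) * (X - C ((A - B) / 2)) =
      X ^ 2 + C B * X + C ((η₁ + μ) * (γ₁ + μ) - β₁ * η₁) := by
    linear_combination (-(X : ℝ[X])) * h2 + h1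
  rw [mul_assoc, hrhs, hJ, Matrix.charpoly]
  simp [Matrix.det_succ_row_zero, Fin.sum_univ_succ, Matrix.charmatrix_apply,
    Matrix.one_apply, Fin.succAbove, Matrix.diagonal, hB, C_add, C_mul, C_sub, C_neg, map_ofNat]
  ring
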